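/- For every real a and every b ≥ 1 there exists a constant c = c(a,b) > 0 such that for all real γ > 1, Σ_{1 ≤ j ≤ bγ} j^a e^{-γ/j} ≤ c γ^{a+1}. -/

import Mathlib

/-- For every real `a` and `b ≥ 1` there is `c > 0` with
`Σ_{1 ≤ j ≤ bγ} j^a e^{-γ/j} ≤ c γ^{a+1}` for all `γ > 1`. -/
theorem sum_pow_exp_div_le (a b : ℝ) (hb : 1 ≤ b) :
    ∃ c : ℝ, 0 < c ∧ ∀ γ : ℝ, 1 < γ →
      ∑ j ∈ Finset.Icc 1 ⌊b * γ⌋₊, (j : ℝ) ^ a * Real.exp (-γ / j) ≤ c * γ ^ (a + 1) := by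
  obtain ⟨n, hn⟩ : ∃ n : ℕ, -a ≤ n := exists_nat_ge (-a)
  have hb0 : (0:ℝ) < b := lt_of_lt_of_le one_pos hb
  refine ⟨(n.factorial : ℝ) * b ^ (a + n + 1), by positivity, ?_⟩
  intro γ hγ
  have hγ0 : (0:ℝ) < γ := lt_trans one_pos hγ
  have hbγ : (0:ℝ) < b * γ := mul_pos hb0 hγ0
  set B : ℝ := (n.factorial : ℝ) * b ^ (a + n) * γ ^ a with hB
  have hBnn : 0 ≤ B := by positivity
  have key : ∀ j ∈ Finset.Icc 1 ⌊b * γ⌋₊,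
      (j : ℝ) ^ a * Real.exp (-γ / j) ≤ B := by
    intro j hj
    obtain ⟨hj1, hj2⟩ := Finset.mem_Icc.mp hj
    have hj1' : (1:ℝ) ≤ (j:ℝ) := by exact_mod_cast hj1
    have hj0 : (0:ℝ) < j := lt_of_lt_of_le one_pos hj1'
    have hjb : (j:ℝ) ≤ b * γ := le_trans (by exact_mod_cast hj2) (Nat.floor_le hbγ.le)
    have hx : (0:ℝ) < γ / j := div_pos hγ0 hj0
    have h1 : (γ / j) ^ n / n.factorial ≤ Real.exp (γ / j) :=
      Real.pow_div_factorial_le_exp _ hx.le n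
    have hexp : Real.exp (-γ / j) ≤ (n.factorial : ℝ) * (j:ℝ) ^ n / γ ^ n := by
      rw [neg_div, Real.exp_neg]
      rw [inv_le_iff_one_le_mul₀ (Real.exp_pos _)]
      calc (1:ℝ) = ((γ / j) ^ n / n.factorial) * ((n.factorial : ℝ) * (j:ℝ) ^ n / γ ^ n) := by
              field_simp
              rw [← mul_pow, div_mul_cancel₀ _ hj0.ne']
        _ ≤ Real.exp (γ / j) * ((n.factorial : ℝ) * (j:ℝ) ^ n / γ ^ n) := by
              apply mul_le_mul_of_nonneg_right h1
              positivity
        _ = (n.factorial : ℝ) * (j:ℝ) ^ n / γ ^ n * Real.exp (γ / j) := by ring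
    calc (j : ℝ) ^ a * Real.exp (-γ / j)
        ≤ (j : ℝ) ^ a * ((n.factorial : ℝ) * (j:ℝ) ^ n / γ ^ n) := by
          apply mul_le_mul_of_nonneg_left hexp
          positivity
      _ = (n.factorial : ℝ) * ((j:ℝ) ^ (a + n)) / γ ^ n := by
          rw [Real.rpow_add hj0, Real.rpow_natCast]
          ring
      _ ≤ (n.factorial : ℝ) * ((b * γ) ^ (a + n)) / γ ^ n := by
          have han : (0:ℝ) ≤ a + n := by linarith
          have := Real.rpow_le_rpow hj0.le hjb han
          gcongr
      _ = B := by
          rw [hB, Real.mul_rpow hb0.le hγ0.le, Real.rpow_add hγ0, Real.rpow_natCast]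
          have hγn : (γ:ℝ) ^ n ≠ 0 := by positivity
          field_simp
  have hcard : (Finset.Icc 1 ⌊b * γ⌋₊).card = ⌊b * γ⌋₊ := by
    rw [Nat.card_Icc]; omega
  calc ∑ j ∈ Finset.Icc 1 ⌊b * γ⌋₊, (j : ℝ) ^ a * Real.exp (-γ / j)
      ≤ (Finset.Icc 1 ⌊b * γ⌋₊).card • B := Finset.sum_le_card_nsmul _ _ _ key
    _ = (⌊b * γ⌋₊ : ℝ) * B := by rw [hcard, nsmul_eq_mul]
    _ ≤ (b * γ) * B := by
        apply mul_le_mul_of_nonneg_right (Nat.floor_le hbγ.le) hBnn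
    _ = (n.factorial : ℝ) * b ^ (a + n + 1) * γ ^ (a + 1) := by
        rw [hB, Real.rpow_add hb0 (a+n) 1, Real.rpow_add hγ0 a 1, Real.rpow_one, Real.rpow_one]
        ring
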